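/- Let D̄ be the closed modular triangle, γ a Jordan curve with trace in D̄ of positive Lebesgue measure satisfying min{Re z : z ∈ tr γ} = −1/2 and max{Re z : z ∈ tr γ} < 1/2, T(z) = z + 1, and F := (D̄ \ int γ) ∪ T(tr γ ∪ int γ). Then μ(F) = μ(D̄) + μ(tr γ) > μ(D̄), where μ is hyperbolic area. -/

import Mathlib

open Bornology MeasureTheory

/-- The hyperbolic area measure on the upper half-plane: `dμ = y⁻² dx dy`. -/
noncomputable def hypMeasure : Measure ℂ :=
  volume.withDensity (fun z => ENNReal.ofReal ((z.im ^ 2)⁻¹))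

/-- The closed modular triangle. -/
def closedModularTriangle : Set ℂ :=
  {z : ℂ | 0 < z.im ∧ |z.re| ≤ 1 / 2 ∧ 1 ≤ ‖z‖}

lemma hypDensity_measurable :
    Measurable (fun z : ℂ => ENNReal.ofReal ((z.im ^ 2)⁻¹)) :=
  ((Complex.measurable_im.pow_const 2).inv).ennreal_ofReal

lemma measurableSet_triangle : MeasurableSet closedModularTriangle := by
  have h1 : MeasurableSet {z : ℂ | 0 < z.im} :=
    measurableSet_lt measurable_const Complex.measurable_im
  have h2 : MeasurableSet {z : ℂ | |z.re| ≤ 1/2} :=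
    measurableSet_le Complex.measurable_re.abs measurable_const
  have h3 : MeasurableSet {z : ℂ | 1 ≤ ‖z‖} :=
    measurableSet_le measurable_const continuous_norm.measurable
  exact h1.inter (h2.inter h3)

lemma hyp_translate (s : Set ℂ) (hs : MeasurableSet s) :
    hypMeasure ((fun z => z + 1) '' s) = hypMeasure s := by
  have hemb : MeasurableEmbedding (fun z : ℂ => z + 1) :=
    (Homeomorph.addRight (1 : ℂ)).measurableEmbedding
  have hmp : MeasurePreserving (fun z : ℂ => z + 1) volume volume :=
    measurePreserving_add_right volume 1
  rw [hypMeasure, withDensity_apply _ (hemb.measurableSet_image.mpr hs),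
    withDensity_apply _ hs, ← hmp.setLIntegral_comp_emb hemb _ s]
  simp

lemma volume_line (c : ℝ) : volume {z : ℂ | z.re = c} = 0 := by
  have he : {z : ℂ | z.re = c} = Complex.measurableEquivRealProd ⁻¹' ({c} ×ˢ Set.univ) := by
    ext z
    simp [Complex.measurableEquivRealProd_apply, eq_comm]
  rw [he, Complex.volume_preserving_equiv_real_prod.measure_preimage
    (((measurableSet_singleton c).prod MeasurableSet.univ).nullMeasurableSet)]
  rw [MeasureTheory.Measure.volume_eq_prod, Measure.prod_prod]
  simp

lemma compl_triangle_preconnected : IsPreconnected closedModularTriangleᶜ := by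
  apply isPreconnected_of_forall (-Complex.I)
  intro y hy
  have hm : ((y.re : ℂ) - Complex.I).re = y.re := by simp
  have hmim : ((y.re : ℂ) - Complex.I).im = -1 := by simp
  refine ⟨segment ℝ y ((y.re : ℂ) - Complex.I) ∪ segment ℝ ((y.re : ℂ) - Complex.I) (-Complex.I),
    ?_, Or.inr (right_mem_segment ℝ _ _), Or.inl (left_mem_segment ℝ y _),
    (convex_segment y _).isPreconnected.union _ (right_mem_segment ℝ y _)
      (left_mem_segment ℝ _ _) (convex_segment _ (-Complex.I)).isPreconnected⟩
  rintro z (hz | hz)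
  · obtain ⟨u, v, hu, hv, huv, rfl⟩ := hz
    have hzre : (u • y + v • ((y.re : ℂ) - Complex.I)).re = y.re := by
      simp [Complex.add_re, Complex.smul_re, hm]
      linear_combination y.re * huv
    have hzim : (u • y + v • ((y.re : ℂ) - Complex.I)).im = u * y.im - v := by
      simp [Complex.add_im, Complex.smul_im, hmim]
      ring
    rintro ⟨h1', h2', h3'⟩
    rw [hzim] at h1'
    rw [hzre] at h2'
    have hyim : 0 < y.im := by nlinarith
    have hle : (u • y + v • ((y.re : ℂ) - Complex.I)).im ≤ y.im := by rw [hzim]; nlinarith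
    have hy' : ¬ (|y.re| ≤ 1/2 ∧ 1 ≤ ‖y‖) := fun h => hy ⟨hyim, h.1, h.2⟩
    rw [not_and_or, not_le, not_le] at hy'
    rcases hy' with h | h
    · exact absurd h2' (not_le.mpr h)
    · have h1 : ‖u • y + v • ((y.re : ℂ) - Complex.I)‖ ^ 2
          = (u • y + v • ((y.re : ℂ) - Complex.I)).re ^ 2
            + (u • y + v • ((y.re : ℂ) - Complex.I)).im ^ 2 := by
        rw [Complex.sq_norm, Complex.normSq_apply]; ring
      have h2 : ‖y‖ ^ 2 = y.re ^ 2 + y.im ^ 2 := by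
        rw [Complex.sq_norm, Complex.normSq_apply]; ring
      have hzim0 : 0 < (u • y + v • ((y.re : ℂ) - Complex.I)).im := by rw [hzim]; linarith
      have hsq : (u • y + v • ((y.re : ℂ) - Complex.I)).im ^ 2 ≤ y.im ^ 2 :=
        pow_le_pow_left₀ hzim0.le hle 2
      rw [hzre] at h1
      have e1 : (1:ℝ) ≤ ‖u • y + v • ((y.re : ℂ) - Complex.I)‖ ^ 2 := by
        nlinarith [h3']
      have e2 : ‖y‖ ^ 2 < 1 := by nlinarith [norm_nonneg y, h]
      linarith
  · obtain ⟨u, v, hu, hv, huv, rfl⟩ := hz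
    rintro ⟨h1', -, -⟩
    have : (u • ((y.re : ℂ) - Complex.I) + v • (-Complex.I)).im = -1 := by
      simp [Complex.add_im, Complex.smul_im, hmim]
      linarith
    rw [this] at h1'
    linarith

lemma hyp_triangle_ne_top : hypMeasure closedModularTriangle ≠ ⊤ := by
  have hsub : closedModularTriangle ⊆
      Complex.measurableEquivRealProd ⁻¹' (Set.Icc (-(1/2)) (1/2) ×ˢ Set.Ioi (1/2)) := by
    rintro z ⟨h1, h2, h3⟩
    simp only [Set.mem_preimage, Complex.measurableEquivRealProd_apply, Set.mem_prod,
      Set.mem_Icc, Set.mem_Ioi]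
    rw [abs_le] at h2
    refine ⟨⟨h2.1, h2.2⟩, ?_⟩
    have h4 : 1 ≤ z.re ^ 2 + z.im ^ 2 := by
      have h5 := Complex.sq_norm z
      rw [Complex.normSq_apply] at h5
      nlinarith [h3, norm_nonneg z]
    nlinarith [h2.1, h2.2, h1]
  have hmeas : MeasurableSet (Set.Icc (-(1/2):ℝ) (1/2) ×ˢ Set.Ioi ((1/2):ℝ)) :=
    measurableSet_Icc.prod measurableSet_Ioi
  have key : hypMeasure (Complex.measurableEquivRealProd ⁻¹'
      (Set.Icc (-(1/2)) (1/2) ×ˢ Set.Ioi (1/2))) < ⊤ := by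
    rw [hypMeasure, withDensity_apply _ (hmeas.preimage Complex.measurableEquivRealProd.measurable)]
    have heq := Complex.volume_preserving_equiv_real_prod.setLIntegral_comp_preimage_emb
      Complex.measurableEquivRealProd.measurableEmbedding
      (fun p : ℝ × ℝ => ENNReal.ofReal ((p.2 ^ 2)⁻¹))
      (Set.Icc (-(1/2)) (1/2) ×ˢ Set.Ioi (1/2))
    simp only [Complex.measurableEquivRealProd_apply] at heq
    rw [heq]
    rw [MeasureTheory.Measure.volume_eq_prod, ← Measure.prod_restrict]
    rw [MeasureTheory.lintegral_prod (fun p : ℝ × ℝ => ENNReal.ofReal ((p.2 ^ 2)⁻¹)) (((measurable_snd.pow_const 2).inv.ennreal_ofReal).aemeasurable)]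
    have hC : ∫⁻ y in Set.Ioi ((1/2):ℝ), ENNReal.ofReal ((y ^ 2)⁻¹) < ⊤ := by
      have hint : IntegrableOn (fun y : ℝ => (y ^ 2)⁻¹) (Set.Ioi (1/2)) := by
        have h0 := integrableOn_Ioi_rpow_of_lt (by norm_num : (-2:ℝ) < -1)
          (by norm_num : (0:ℝ) < 1/2)
        apply h0.congr_fun ?_ measurableSet_Ioi
        intro y hy
        have hy0 : (0:ℝ) < y := lt_trans (by norm_num) hy
        show y ^ ((-2):ℝ) = (y ^ 2)⁻¹
        rw [Real.rpow_neg hy0.le, show ((2:ℝ) = ((2:ℕ):ℝ)) by norm_num, Real.rpow_natCast]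
      exact hint.lintegral_lt_top
    simp only [Prod.snd]
    rw [lintegral_const, Measure.restrict_apply_univ]
    exact ENNReal.mul_lt_top hC (by rw [Real.volume_Icc]; exact ENNReal.ofReal_lt_top)
  exact ne_top_of_le_ne_top key.ne (measure_mono hsub)

/-- Example 4: with a Jordan curve of trace `K ⊆ D̄` of positive Lebesgue measure,
`min (Re '' K) = -1/2`, `Re < 1/2` on `K`, and `F = (D̄ \ int γ) ∪ T(tr γ ∪ int γ)`, the
hyperbolic area satisfies `μ F = μ D̄ + μ K > μ D̄`. -/
theorem example4_measure_excess
    (γ : Circle → ℂ) (hcont : Continuous γ) (hinj : Function.Injective γ)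
    (K I E : Set ℂ) (hK : K = Set.range γ) (hKD : K ⊆ closedModularTriangle)
    (hKpos : 0 < volume K)
    (hmin : IsLeast (Complex.re '' K) (-(1 / 2))) (hmax : ∀ z ∈ K, z.re < 1 / 2)
    (hIo : IsOpen I) (hEo : IsOpen E) (hIc : IsConnected I) (hEc : IsConnected E)
    (hIb : IsBounded I) (hEb : ¬ IsBounded E) (hdisj : Disjoint I E) (hIE : I ∪ E = Kᶜ)
    (hfI : frontier I = K) (hfE : frontier E = K)
    (F : Set ℂ) (hF : F = (closedModularTriangle \ I) ∪ (fun z => z + 1) '' (K ∪ I)) :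
    hypMeasure F = hypMeasure closedModularTriangle + hypMeasure K ∧
    hypMeasure closedModularTriangle < hypMeasure F := by
  have hKm : MeasurableSet K := hK ▸ (isCompact_range hcont).measurableSet
  have hIm : MeasurableSet I := hIo.measurableSet
  have hemb : MeasurableEmbedding (fun z : ℂ => z + 1) :=
    (Homeomorph.addRight (1 : ℂ)).measurableEmbedding
  have hBm : MeasurableSet ((fun z : ℂ => z + 1) '' (K ∪ I)) :=
    hemb.measurableSet_image.mpr (hKm.union hIm)
  -- `I` is contained in the closed modular triangle
  have hIKc : I ⊆ Kᶜ := hIE ▸ Set.subset_union_left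
  have hID : I ⊆ closedModularTriangle := by
    have hsub : closedModularTriangleᶜ ⊆ I ∪ E := by
      rw [hIE]; exact Set.compl_subset_compl.mpr hKD
    rcases compl_triangle_preconnected.subset_or_subset hIo hEo hdisj hsub with h | h
    · exfalso
      obtain ⟨r, hr⟩ := (isBounded_iff_forall_norm_le.mp (hIb.subset h))
      have hz : ((|r| + 1 : ℝ) : ℂ) - Complex.I ∈ closedModularTriangleᶜ := by
        intro hmem
        have h1 := hmem.1
        simp at h1
        linarith
      have h2 := hr _ hz
      have h3 : |(((|r| + 1:ℝ):ℂ) - Complex.I).re| ≤ ‖((|r| + 1:ℝ):ℂ) - Complex.I‖ :=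
        Complex.abs_re_le_norm _
      have h4 : (((|r| + 1:ℝ):ℂ) - Complex.I).re = |r| + 1 := by simp
      rw [h4] at h3
      have h5 : |r| + 1 ≤ abs (|r| + 1) := le_abs_self _
      linarith [le_abs_self r]
    · intro z hz
      by_contra hzD
      exact Set.disjoint_left.mp hdisj hz (h hzD)
  -- the two pieces of `F` intersect in a null set
  have hnull : hypMeasure ((closedModularTriangle \ I) ∩ ((fun z : ℂ => z + 1) '' (K ∪ I))) = 0 := by
    apply measure_mono_null (t := {z : ℂ | z.re = 1/2})
    · rintro z ⟨⟨hzT, -⟩, ⟨w, hw, rfl⟩⟩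
      have hw1 : w ∈ closedModularTriangle := hw.elim (fun h => hKD h) (fun h => hID h)
      have hw2 : -(1/2) ≤ w.re := (abs_le.mp hw1.2.1).1
      have hz2 : (w + 1).re ≤ 1/2 := (abs_le.mp hzT.2.1).2
      have : (w + 1).re = w.re + 1 := by simp
      simp only [Set.mem_setOf_eq, this]
      rw [this] at hz2
      linarith
    · exact withDensity_absolutelyContinuous _ _ (volume_line _)
  -- disjointness of K and I
  have hKIdisj : Disjoint K I := (Set.subset_compl_iff_disjoint_left.mp hIKc)
  -- the measure of F splits
  have key : hypMeasure F = hypMeasure (closedModularTriangle \ I)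
      + hypMeasure ((fun z : ℂ => z + 1) '' (K ∪ I)) := by
    rw [hF]
    have h := measure_union_add_inter (μ := hypMeasure) (closedModularTriangle \ I) hBm
    rw [hnull, add_zero] at h
    exact h
  have htrans : hypMeasure ((fun z : ℂ => z + 1) '' (K ∪ I)) = hypMeasure K + hypMeasure I := by
    rw [hyp_translate _ (hKm.union hIm), measure_union hKIdisj hIm]
  have hdiff : hypMeasure (closedModularTriangle \ I) + hypMeasure I
      = hypMeasure closedModularTriangle := by
    have h := measure_diff_add_inter (μ := hypMeasure) closedModularTriangle hIm
    rwa [Set.inter_eq_self_of_subset_right hID] at h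
  have hEq : hypMeasure F = hypMeasure closedModularTriangle + hypMeasure K := by
    rw [key, htrans, ← hdiff]; ring
  -- positivity of hypMeasure K
  have hKpos' : 0 < hypMeasure K := by
    rw [hypMeasure, withDensity_apply _ hKm, setLIntegral_pos_iff hypDensity_measurable]
    have hsupp : Function.support (fun z : ℂ => ENNReal.ofReal ((z.im ^ 2)⁻¹)) ∩ K = K := by
      apply Set.inter_eq_self_of_subset_right
      intro z hz
      have him := (hKD hz).1
      simp only [Function.mem_support, ne_eq, ENNReal.ofReal_eq_zero, not_le]
      positivity
    rw [hsupp]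
    exact hKpos
  exact ⟨hEq, hEq ▸ ENNReal.lt_add_right hyp_triangle_ne_top (ne_of_gt hKpos')⟩
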